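/- Let b ≥ 2 be an integer and let ρ > e be a real number. There exist a constant C > 0 and D ∈ ℕ such that for all d ≥ D and all natural numbers m with 1 ≤ m ≤ √d, the unique t > 0 satisfying (ρ/e)^t · (t/((b−1)·d))^m = 1 obeys |t·(log ρ − 1) − m·(log d − log m − log(log(max(d/m, e))))| ≤ C·m. -/
import Mathlib
set_option maxHeartbeats 800000

/-- The pre-mixing first-moment equation in the fast-branching regime `ρ > e`:
`(ρ/e)^t · (t/((b−1)·d))^m = 1`. -/
noncomputable def fastEq (b d m : ℕ) (ρ t : ℝ) : Prop :=
  (ρ / Real.exp 1) ^ t * (t / (((b : ℝ) - 1) * d)) ^ m = 1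

/-- Let `b ≥ 2` be an integer and `ρ > e`. There exist `C > 0` and `D ∈ ℕ` such that for
all `d ≥ D` and all `m` with `1 ≤ m ≤ √d`, the unique `t > 0` solving
`(ρ/e)^t · (t/((b−1)·d))^m = 1` satisfies
`|t·(log ρ − 1) − m·(log d − log m − log log (max (d/m) e))| ≤ C·m`. -/
theorem fastEq_solution_asymptotics (b : ℕ) (hb : 2 ≤ b) (ρ : ℝ)
    (hρ : Real.exp 1 < ρ) :
    ∃ C : ℝ, 0 < C ∧ ∃ D : ℕ,
      ∀ d ≥ D, ∀ m : ℕ, 1 ≤ m → (m : ℝ) ≤ Real.sqrt d →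
        ∀ t : ℝ, 0 < t → fastEq b d m ρ t →
          |t * (Real.log ρ - 1) -
              (m : ℝ) * (Real.log d - Real.log m -
                Real.log (Real.log (max ((d : ℝ) / m) (Real.exp 1))))| ≤ C * m := by
  have hρ0 : 0 < ρ := lt_trans (Real.exp_pos 1) hρ
  obtain ⟨a, ha_def⟩ : ∃ a : ℝ, a = Real.log ρ - 1 := ⟨_, rfl⟩
  have ha : 0 < a := by
    have : 1 < Real.log ρ := (Real.lt_log_iff_exp_lt hρ0).2 hρ
    rw [ha_def]; linarith
  have hb1 : (1:ℝ) ≤ (b:ℝ) - 1 := by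
    have : (2:ℝ) ≤ (b:ℝ) := by exact_mod_cast hb
    linarith
  have hlogb : 0 ≤ Real.log ((b:ℝ) - 1) := Real.log_nonneg hb1
  have hlog8 : 0 ≤ Real.log 8 := Real.log_nonneg (by norm_num)
  have hlog2 : 0 ≤ Real.log 2 := Real.log_nonneg (by norm_num)
  have hlogb1 : 0 ≤ Real.log (1 + Real.log ((b:ℝ) - 1)) :=
    Real.log_nonneg (by linarith)
  have habs : 0 ≤ |Real.log a| := abs_nonneg _
  obtain ⟨K, hK_def⟩ : ∃ K : ℝ, K = 3 * (Real.log 8 + |Real.log a|) + a + 2 := ⟨_, rfl⟩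
  have hK2 : 2 ≤ K := by rw [hK_def]; linarith
  obtain ⟨C, hC_def⟩ : ∃ C : ℝ, C = Real.log ((b:ℝ) - 1) +
      Real.log (1 + Real.log ((b:ℝ) - 1)) + Real.log 2 + |Real.log a| + 1 := ⟨_, rfl⟩
  have hC : 0 < C := by rw [hC_def]; linarith
  refine ⟨C, hC, ⟨Nat.ceil (Real.exp (2 * K)), ?_⟩⟩
  intro d hd m hm1 hmsqrt t ht hfe
  rw [← ha_def]
  have hdR : Real.exp (2 * K) ≤ (d : ℝ) := by
    calc Real.exp (2 * K) ≤ (Nat.ceil (Real.exp (2 * K)) : ℝ) := Nat.le_ceil _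
    _ ≤ (d : ℝ) := by exact_mod_cast hd
  have hd0 : (0:ℝ) < d := lt_of_lt_of_le (Real.exp_pos _) hdR
  have hm0 : (0:ℝ) < m := by exact_mod_cast hm1
  have hlogd : 2 * K ≤ Real.log d := (Real.le_log_iff_exp_le hd0).2 hdR
  have hsq0 : 0 < Real.sqrt d := Real.sqrt_pos.2 hd0
  have hdm : Real.sqrt d ≤ (d:ℝ) / m := by
    rw [← Real.div_sqrt]
    exact div_le_div_of_nonneg_left hd0.le hm0 hmsqrt
  obtain ⟨L0, hL0_def⟩ : ∃ L0 : ℝ, L0 = Real.log ((d:ℝ) / m) := ⟨_, rfl⟩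
  have hL0K : K ≤ L0 := by
    have h1 : Real.log (Real.sqrt d) ≤ Real.log ((d:ℝ)/m) := Real.log_le_log hsq0 hdm
    rw [Real.log_sqrt hd0.le] at h1
    rw [hL0_def]; linarith
  have hL0pos : 0 < L0 := lt_of_lt_of_le (by linarith) hL0K
  have hdm0 : (0:ℝ) < (d:ℝ)/m := div_pos hd0 hm0
  have hem : Real.exp 1 ≤ (d:ℝ)/m := by
    calc Real.exp 1 ≤ Real.exp L0 := Real.exp_le_exp.2 (by linarith)
    _ = (d:ℝ)/m := by rw [hL0_def]; exact Real.exp_log hdm0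
  have hmax : max ((d:ℝ)/m) (Real.exp 1) = (d:ℝ)/m := max_eq_left hem
  obtain ⟨u, hu_def⟩ : ∃ u : ℝ, u = ((b:ℝ) - 1) * d := ⟨_, rfl⟩
  have hu : 0 < u := by rw [hu_def]; exact mul_pos (by linarith) hd0
  have heq : t * a + (m:ℝ) * Real.log (t / u) = 0 := by
    have hfe0 : (ρ / Real.exp 1) ^ t * (t / (((b : ℝ) - 1) * d)) ^ m = 1 := hfe
    rw [← hu_def] at hfe0
    have h1 : Real.log ((ρ / Real.exp 1) ^ t * (t / u) ^ m) = 0 := by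
      rw [hfe0, Real.log_one]
    have hx : (0:ℝ) < (ρ / Real.exp 1) ^ t :=
      Real.rpow_pos_of_pos (div_pos hρ0 (Real.exp_pos 1)) t
    have hy : (0:ℝ) < (t / u) ^ m := pow_pos (div_pos ht hu) m
    rw [Real.log_mul hx.ne' hy.ne', Real.log_rpow (div_pos hρ0 (Real.exp_pos 1)),
      Real.log_pow, Real.log_div hρ0.ne' (Real.exp_pos 1).ne', Real.log_exp,
      ← ha_def] at h1
    exact_mod_cast h1
  obtain ⟨s, hs_def⟩ : ∃ s : ℝ, s = t / m := ⟨_, rfl⟩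
  have hs0 : 0 < s := by rw [hs_def]; exact div_pos ht hm0
  have hts : t = s * m := by rw [hs_def]; field_simp
  obtain ⟨L, hL_def⟩ : ∃ L : ℝ, L = Real.log (u / m) := ⟨_, rfl⟩
  have hLsplit : L = Real.log ((b:ℝ) - 1) + L0 := by
    rw [hL_def, hL0_def, hu_def, mul_div_assoc,
      Real.log_mul (by linarith) hdm0.ne']
  have hKL : K ≤ L := by linarith
  have hLpos : 0 < L := by linarith
  have heqs : a * s + Real.log s = L := by
    have h1 : Real.log (t / u) = Real.log t - Real.log u := Real.log_div ht.ne' hu.ne'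
    have h2 : Real.log t = Real.log s + Real.log m := by
      rw [hts, Real.log_mul hs0.ne' hm0.ne']
    have h3 : L = Real.log u - Real.log m := by
      rw [hL_def]; exact Real.log_div hu.ne' hm0.ne'
    have h4 : (m:ℝ) * (a * s + Real.log s - L) = t * a + (m:ℝ) * Real.log (t / u) := by
      rw [h1, h2, h3, hts]; ring
    have h5 : (m:ℝ) * (a * s + Real.log s - L) = 0 := by rw [h4, heq]
    rcases mul_eq_zero.mp h5 with h6 | h6
    · exact absurd h6 hm0.ne'
    · linarith
  have hs1 : 1 < s := by
    by_contra h
    push_neg at h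
    have hlogs : Real.log s ≤ 0 := Real.log_nonpos hs0.le h
    have h1 : a * s ≤ a := by
      have h2 := mul_le_mul_of_nonneg_left h ha.le
      simpa using h2
    have h2 : a + 2 ≤ K := by rw [hK_def]; linarith
    linarith
  have hlogs_pos : 0 < Real.log s := Real.log_pos hs1
  have hsupper : s < L / a := by
    rw [lt_div_iff₀ ha]
    linarith
  have hlogL8 : Real.log L ≤ L / 8 - 1 + Real.log 8 := by
    have h8 : Real.log (L / 8) ≤ L / 8 - 1 := Real.log_le_sub_one_of_pos (by positivity)
    have h9 : Real.log L = Real.log (L / 8) + Real.log 8 := by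
      rw [Real.log_div hLpos.ne' (by norm_num)]; ring
    linarith
  have hloga_le : -Real.log a ≤ |Real.log a| := neg_le_abs _
  have hloga_le' : Real.log a ≤ |Real.log a| := le_abs_self _
  have hsu : Real.log s ≤ Real.log L - Real.log a := by
    have h1 : Real.log s ≤ Real.log (L / a) := Real.log_le_log hs0 hsupper.le
    rw [Real.log_div hLpos.ne' ha.ne'] at h1
    linarith
  have hlogs_half : Real.log s ≤ L / 2 := by
    have h1 : 3 * (Real.log 8 + |Real.log a|) ≤ L := by rw [hK_def] at hKL; linarith
    linarith
  have hslower : L / 2 ≤ a * s := by linarith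
  have hsl : L / (2 * a) ≤ s := by
    rw [div_le_iff₀ (by positivity)]
    linarith
  have hsl2 : Real.log L - Real.log 2 - Real.log a ≤ Real.log s := by
    have h1 : Real.log (L / (2 * a)) ≤ Real.log s :=
      Real.log_le_log (by positivity) hsl
    rw [Real.log_div hLpos.ne' (by positivity), Real.log_mul (by norm_num) ha.ne'] at h1
    linarith
  have hLL0 : Real.log L0 ≤ Real.log L := Real.log_le_log hL0pos (by linarith)
  have hLL0' : Real.log L ≤ Real.log L0 + Real.log (1 + Real.log ((b:ℝ) - 1)) := by
    have h1 : L ≤ (1 + Real.log ((b:ℝ) - 1)) * L0 := by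
      have h0 : Real.log ((b:ℝ) - 1) * 1 ≤ Real.log ((b:ℝ) - 1) * L0 :=
        mul_le_mul_of_nonneg_left (by linarith) hlogb
      linarith [h0]
    have h2 : Real.log L ≤ Real.log ((1 + Real.log ((b:ℝ) - 1)) * L0) :=
      Real.log_le_log hLpos h1
    rw [Real.log_mul (by linarith) hL0pos.ne'] at h2
    linarith
  rw [hmax, ← hL0_def]
  have hLd : L0 = Real.log d - Real.log m := by
    rw [hL0_def]; exact Real.log_div hd0.ne' hm0.ne'
  have hkey : t * a - (m:ℝ) * (Real.log d - Real.log m - Real.log L0) =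
      (m:ℝ) * (Real.log ((b:ℝ) - 1) + Real.log L0 - Real.log s) := by
    have h1 : t * a = (m:ℝ) * (a * s) := by rw [hts]; ring
    have h2 : a * s = L - Real.log s := by linarith
    rw [h1, h2, hLsplit, hLd]; ring
  rw [hkey, abs_mul, abs_of_pos hm0, mul_comm C]
  have hX : |Real.log ((b:ℝ) - 1) + Real.log L0 - Real.log s| ≤ C := by
    rw [abs_le, hC_def]
    constructor
    · have h1 : Real.log s ≤ Real.log L0 + Real.log (1 + Real.log ((b:ℝ) - 1)) -
          Real.log a := by linarith
      linarith
    · have h1 : Real.log L0 - Real.log 2 - Real.log a ≤ Real.log s := by linarith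
      linarith
  exact mul_le_mul_of_nonneg_left hX hm0.le
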